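/- For all x < −1 and y > 1: v₁(x) = 2^{αρ̂−1}·c_{αρ}·U(x,y)/g(y) − sin(παρ)·(1−αρ̂)·((y−x)^{α−1}/g(y))·∫₁^{z(x,y)} (u−1)^{αρ}(u+1)^{αρ̂−2} du + (α−1)₊·sin(παρ)·(∫₁^{|x|} ψ_{αρ̂}(u) du)·((αρ/g(y))·∫₁^y ψ_{αρ̂}(u) du − 1). -/

import Mathlib

open Real MeasureTheory Set Filter intervalIntegral
open scoped Topology

/-- `ψ_{αρ}(u) = (u−1)^{αρ̂−1}(u+1)^{αρ−1}` where `ρ̂ = 1 − ρ`. -/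
noncomputable def psiRho (α ρ : ℝ) (u : ℝ) : ℝ :=
  (u - 1) ^ (α * (1 - ρ) - 1) * (u + 1) ^ (α * ρ - 1)

/-- `ψ_{αρ̂}(u) = (u−1)^{αρ−1}(u+1)^{αρ̂−1}` where `ρ̂ = 1 − ρ`. -/
noncomputable def psiRhoHat (α ρ : ℝ) (u : ℝ) : ℝ :=
  (u - 1) ^ (α * ρ - 1) * (u + 1) ^ (α * (1 - ρ) - 1)

/-- `g(y) = (y−1)^{αρ}(y+1)^{αρ̂−1}`. -/
noncomputable def gfun (α ρ : ℝ) (y : ℝ) : ℝ :=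
  (y - 1) ^ (α * ρ) * (y + 1) ^ (α * (1 - ρ) - 1)

/-- `z(x,y) = |xy−1|/|x−y|`. -/
noncomputable def zfun (x y : ℝ) : ℝ := |x * y - 1| / |x - y|

/-- `c_{αρ} = 2^{αρ}·π·αρ·Γ(αρ)/Γ(1−αρ̂)`. -/
noncomputable def cRho (α ρ : ℝ) : ℝ :=
  2 ^ (α * ρ) * π * (α * ρ) * Real.Gamma (α * ρ) / Real.Gamma (1 - α * (1 - ρ))

/-- The harmonic function `v₁` (defined piecewise for `x > 1` and `x < −1`). -/
noncomputable def v1fun (α ρ : ℝ) (x : ℝ) : ℝ :=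
  if 1 < x then
    Real.sin (π * (α * (1 - ρ))) *
      ((x + 1) * psiRho α ρ x - max (α - 1) 0 * ∫ u in (1:ℝ)..x, psiRho α ρ u)
  else
    Real.sin (π * (α * ρ)) *
      ((|x| - 1) * psiRhoHat α ρ |x| - max (α - 1) 0 * ∫ u in (1:ℝ)..|x|, psiRhoHat α ρ u)

/-- The explicit Profeta–Simon Green function `U(x,y)` (for `x > y > 1` resp. `x < −1 < 1 < y`). -/
noncomputable def Ufun (α ρ : ℝ) (x y : ℝ) : ℝ :=
  if 1 < x then
    (2 ^ (1 - α) / (Real.Gamma (α * ρ) * Real.Gamma (α * (1 - ρ)))) *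
      ((x - y) ^ (α - 1) * (∫ u in (1:ℝ)..zfun x y, psiRhoHat α ρ u)
        - max (α - 1) 0 * (∫ u in (1:ℝ)..y, psiRhoHat α ρ u) * ∫ u in (1:ℝ)..x, psiRho α ρ u)
  else
    (Real.sin (π * (α * ρ)) / Real.sin (π * (α * (1 - ρ)))) *
    (2 ^ (1 - α) / (Real.Gamma (α * ρ) * Real.Gamma (α * (1 - ρ)))) *
      ((y - x) ^ (α - 1) * (∫ u in (1:ℝ)..zfun x y, psiRhoHat α ρ u)
        - max (α - 1) 0 * (∫ u in (1:ℝ)..y, psiRhoHat α ρ u) * ∫ u in (1:ℝ)..|x|, psiRhoHat α ρ u)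

lemma intInt1 {s t z : ℝ} (hs : 0 < s) (hz : 1 ≤ z) :
    IntervalIntegrable (fun u => (u-1)^(s-1)*(u+1)^(t-1)) volume 1 z := by
  have h1 : IntervalIntegrable (fun u : ℝ => (u-1)^(s-1)) volume 1 z := by
    have := (intervalIntegrable_rpow' (a := 0) (b := z-1) (r := s-1) (by linarith)).comp_sub_right 1
    simpa using this
  apply h1.mul_continuousOn
  apply ContinuousOn.rpow_const (by fun_prop)
  intro u hu
  rw [uIcc_of_le hz] at hu
  have : (1:ℝ) ≤ u := hu.1
  left; positivity

lemma intInt2 {s t z : ℝ} (hs : 0 < s) (hz : 1 ≤ z) :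
    IntervalIntegrable (fun u => (u-1)^s*(u+1)^(t-2)) volume 1 z := by
  apply ContinuousOn.intervalIntegrable
  apply ContinuousOn.mul
  · apply ContinuousOn.rpow_const (by fun_prop)
    intro u hu; right; exact hs.le
  · apply ContinuousOn.rpow_const (by fun_prop)
    intro u hu
    rw [uIcc_of_le hz] at hu
    have : (1:ℝ) ≤ u := hu.1
    left; positivity

lemma ftc_aux {s t z : ℝ} (hs : 0 < s) (hz : 1 < z) :
    ∫ u in (1:ℝ)..z, (s * ((u-1)^(s-1) * (u+1)^(t-1)) + (t-1) * ((u-1)^s * (u+1)^(t-2)))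
      = (z-1)^s * (z+1)^(t-1) := by
  have key := intervalIntegral.integral_eq_sub_of_hasDeriv_right_of_le (a := 1) (b := z)
    (f := fun u => (u-1)^s * (u+1)^(t-1))
    (f' := fun u => s * ((u-1)^(s-1) * (u+1)^(t-1)) + (t-1) * ((u-1)^s * (u+1)^(t-2)))
    hz.le ?_ ?_ ?_
  · rw [key]
    rw [show (1:ℝ)-1 = 0 by ring, Real.zero_rpow hs.ne']
    ring
  · apply ContinuousOn.mul
    · apply ContinuousOn.rpow_const (by fun_prop)
      intro u hu; right; exact hs.le
    · apply ContinuousOn.rpow_const (by fun_prop)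
      intro u hu
      have : (1:ℝ) ≤ u := hu.1
      left; positivity
  · intro u hu
    have hu1 : (0:ℝ) < u - 1 := by linarith [hu.1]
    have hu2 : (0:ℝ) < u + 1 := by linarith [hu.1]
    apply HasDerivAt.hasDerivWithinAt
    have d1 : HasDerivAt (fun u : ℝ => (u-1)^s) (s * (u-1)^(s-1)) u := by
      have := (((hasDerivAt_id u).sub_const 1).rpow_const (p := s) (Or.inl hu1.ne'))
      simpa using this
    have d2 : HasDerivAt (fun u : ℝ => (u+1)^(t-1)) ((t-1) * (u+1)^(t-1-1)) u := by
      have := (((hasDerivAt_id u).add_const 1).rpow_const (p := t-1) (Or.inl hu2.ne'))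
      simpa [mul_comm] using this
    have := d1.mul d2
    refine this.congr_deriv ?_
    ring_nf
  · exact ((intInt1 hs hz.le).const_mul s).add ((intInt2 hs hz.le).const_mul (t-1))

/-- Lemma 3.1 (case `x < −1`, `y > 1`): pointwise relation between `v₁` and the Green
function `U(x,y)`. -/
theorem stmt_2 (α ρ : ℝ) (hα0 : 0 < α) (hα2 : α < 2) (hρ0 : 0 < ρ) (hρ1 : ρ < 1)
    (hαρ : α * ρ < 1) (hαρh : α * (1 - ρ) < 1)
    (x y : ℝ) (hx : x < -1) (hy : 1 < y) :
    v1fun α ρ x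
      = 2 ^ (α * (1 - ρ) - 1) * cRho α ρ * Ufun α ρ x y / gfun α ρ y
        - Real.sin (π * (α * ρ)) * (1 - α * (1 - ρ)) * ((y - x) ^ (α - 1) / gfun α ρ y)
            * (∫ u in (1:ℝ)..zfun x y, (u - 1) ^ (α * ρ) * (u + 1) ^ (α * (1 - ρ) - 2))
        + max (α - 1) 0 * Real.sin (π * (α * ρ)) * (∫ u in (1:ℝ)..|x|, psiRhoHat α ρ u)
            * ((α * ρ / gfun α ρ y) * (∫ u in (1:ℝ)..y, psiRhoHat α ρ u) - 1) := by
  have hs0 : 0 < α * ρ := by positivity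
  have ht0 : 0 < α * (1 - ρ) := by nlinarith
  have hA : (0:ℝ) < -x - 1 := by linarith
  have hB : (0:ℝ) < -x + 1 := by linarith
  have hC : (0:ℝ) < y - 1 := by linarith
  have hD : (0:ℝ) < y + 1 := by linarith
  have hE : (0:ℝ) < y - x := by linarith
  have hxn : ¬ (1 < x) := by linarith
  have hax : |x| = -x := abs_of_neg (by linarith)
  have hxy1 : x * y - 1 < 0 := by nlinarith
  have hxy2 : x - y < 0 := by linarith
  have hz : zfun x y = (x*y-1)/(x-y) := by
    unfold zfun; rw [abs_of_neg hxy1, abs_of_neg hxy2, neg_div_neg_eq]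
  have hz1 : 1 < zfun x y := by
    rw [hz, lt_div_iff_of_neg hxy2]; nlinarith
  have hq : zfun x y * (x - y) = x*y - 1 := by
    rw [hz, div_mul_cancel₀ _ hxy2.ne]
  have hw1 : zfun x y - 1 = (-x-1)*(y-1)/(y-x) := by
    rw [eq_div_iff hE.ne']
    linear_combination -hq
  have hw2 : zfun x y + 1 = (-x+1)*(y+1)/(y-x) := by
    rw [eq_div_iff hE.ne']
    linear_combination -hq
  -- rpow algebra
  have hgz : (y-x)^(α-1) * ((zfun x y - 1)^(α*ρ) * (zfun x y + 1)^(α*(1-ρ)-1))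
      = ((-x-1)^(α*ρ) * (-x+1)^(α*(1-ρ)-1)) * gfun α ρ y := by
    rw [hw1, hw2, gfun, Real.div_rpow (by positivity) hE.le,
      Real.div_rpow (by positivity) hE.le, Real.mul_rpow hA.le hC.le,
      Real.mul_rpow hB.le hD.le]
    have hEsplit : (y-x)^(α-1) = (y-x)^(α*ρ) * (y-x)^(α*(1-ρ)-1) := by
      rw [← Real.rpow_add hE]; congr 1; ring
    rw [hEsplit]
    have h1 : (y-x)^(α*ρ) ≠ 0 := (Real.rpow_pos_of_pos hE _).ne'
    have h2 : (y-x)^(α*(1-ρ)-1) ≠ 0 := (Real.rpow_pos_of_pos hE _).ne'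
    field_simp
  -- the FTC identity, split into two integrals
  have hintA : IntervalIntegrable (fun u : ℝ => (u-1)^(α*ρ-1)*(u+1)^(α*(1-ρ)-1))
      volume 1 (zfun x y) := intInt1 hs0 hz1.le
  have hintB : IntervalIntegrable (fun u : ℝ => (u-1)^(α*ρ)*(u+1)^(α*(1-ρ)-2))
      volume 1 (zfun x y) := intInt2 hs0 hz1.le
  have keyI : (α*ρ) * (∫ u in (1:ℝ)..zfun x y, psiRhoHat α ρ u)
        + (α*(1-ρ)-1) * (∫ u in (1:ℝ)..zfun x y, (u-1)^(α*ρ) * (u+1)^(α*(1-ρ)-2))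
      = (zfun x y - 1)^(α*ρ) * (zfun x y + 1)^(α*(1-ρ)-1) := by
    have h := ftc_aux (s := α*ρ) (t := α*(1-ρ)) hs0 hz1
    rw [intervalIntegral.integral_add (hintA.const_mul _) (hintB.const_mul _),
      intervalIntegral.integral_const_mul, intervalIntegral.integral_const_mul] at h
    simpa only [psiRhoHat] using h
  -- (|x|-1)·ψ̂(|x|)
  have hpsix : (|x|-1) * psiRhoHat α ρ |x| = (-x-1)^(α*ρ) * (-x+1)^(α*(1-ρ)-1) := by
    rw [hax, psiRhoHat, show α*ρ = (α*ρ-1)+1 by ring, Real.rpow_add_one hA.ne']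
    ring
  have hmain : (y-x)^(α-1) * ((α*ρ) * (∫ u in (1:ℝ)..zfun x y, psiRhoHat α ρ u)
        + (α*(1-ρ)-1) * (∫ u in (1:ℝ)..zfun x y, (u-1)^(α*ρ) * (u+1)^(α*(1-ρ)-2)))
      = ((|x|-1) * psiRhoHat α ρ |x|) * gfun α ρ y := by
    rw [keyI, hgz, hpsix]
  -- positivity of the constants
  have hG0 : 0 < gfun α ρ y :=
    mul_pos (Real.rpow_pos_of_pos hC _) (Real.rpow_pos_of_pos hD _)
  have hGs : 0 < Real.Gamma (α*ρ) := Real.Gamma_pos_of_pos hs0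
  have hGt : 0 < Real.Gamma (α*(1-ρ)) := Real.Gamma_pos_of_pos ht0
  have hG1t : 0 < Real.Gamma (1 - α*(1-ρ)) := Real.Gamma_pos_of_pos (by linarith)
  have hT : 0 < Real.sin (π * (α*(1-ρ))) := by
    apply Real.sin_pos_of_pos_of_lt_pi (by positivity)
    nlinarith [Real.pi_pos]
  have hrefl : Real.Gamma (α*(1-ρ)) * Real.Gamma (1 - α*(1-ρ))
      * Real.sin (π * (α*(1-ρ))) = π := by
    rw [Real.Gamma_mul_Gamma_one_sub, div_mul_cancel₀ _ hT.ne']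
  have h2pow : (2:ℝ)^(α*(1-ρ)-1) * ((2:ℝ)^(α*ρ) * (2:ℝ)^(1-α)) = 1 := by
    rw [← Real.rpow_add two_pos, ← Real.rpow_add two_pos,
      show α*(1-ρ)-1 + (α*ρ + (1-α)) = 0 by ring, Real.rpow_zero]
  -- the constant in front of U
  have step : 2 ^ (α*(1-ρ)-1) * cRho α ρ * Ufun α ρ x y
      = Real.sin (π * (α*ρ)) * (α*ρ) *
        ((y - x) ^ (α - 1) * (∫ u in (1:ℝ)..zfun x y, psiRhoHat α ρ u)
          - max (α - 1) 0 * (∫ u in (1:ℝ)..y, psiRhoHat α ρ u)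
            * ∫ u in (1:ℝ)..|x|, psiRhoHat α ρ u) := by
    rw [Ufun, if_neg hxn, cRho]
    have h4 : 2^(α*(1-ρ)-1) * ((2:ℝ)^(α*ρ) * (2:ℝ)^(1-α))
        * (Real.Gamma (α*(1-ρ)) * Real.Gamma (1 - α*(1-ρ)) * Real.sin (π * (α*(1-ρ)))) = π := by
      rw [hrefl]
      linear_combination π * h2pow
    field_simp
    rw [div_eq_iff (by rw [show α * (1 - ρ) * π = π * (α * (1 - ρ)) by ring]; exact hT.ne')]
    linear_combination (norm := ring_nf) (Real.sin (π * (α*ρ)) *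
      ((y - x) ^ (α - 1) * (∫ u in (1:ℝ)..zfun x y, psiRhoHat α ρ u)
        - max (α - 1) 0 * (∫ u in (1:ℝ)..y, psiRhoHat α ρ u)
          * ∫ u in (1:ℝ)..|x|, psiRhoHat α ρ u) * π) * h2pow
      - (Real.sin (π * (α*ρ)) *
      ((y - x) ^ (α - 1) * (∫ u in (1:ℝ)..zfun x y, psiRhoHat α ρ u)
        - max (α - 1) 0 * (∫ u in (1:ℝ)..y, psiRhoHat α ρ u)
          * ∫ u in (1:ℝ)..|x|, psiRhoHat α ρ u)) * hrefl
  rw [v1fun, if_neg hxn, step]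
  field_simp
  linear_combination (norm := ring_nf) (-Real.sin (π * (α*ρ))) * hmain
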